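/- Let N, K be positive integers. For each k ∈ {1,…,K} let H_k be an N×N Hermitian positive semidefinite complex matrix (the lifted channel matrix h_k h_kᴴ of ground terminal k), let σ_k > 0 be the noise standard deviation, R_k^th ∈ ℝ the rate threshold, and c_k ≥ 0 the common-stream rate allocation. Suppose Ŵ_c, Ŵ_0 and Ŵ_{p,1},…,Ŵ_{p,K} are N×N Hermitian positive semidefinite complex matrices satisfying: (i) the power constraint Re Tr(Ŵ_c) + Σ_{k=1}^K Re Tr(Ŵ_{p,k}) + Re Tr(Ŵ_0) ≤ P_max; (ii) for every k, Σ_{j=1}^K c_j ≤ log₂(1 + Re Tr(H_k Ŵ_c)/(Σ_{i=1}^K Re Tr(H_k Ŵ_{p,i}) + Re Tr(H_k Ŵ_0) + σ_k²)); (iii) for every k, c_k + log₂(1 + Re Tr(H_k Ŵ_{p,k})/(Σ_{j≠k} Re Tr(H_k Ŵ_{p,j}) + Re Tr(H_k Ŵ_0) + σ_k²)) ≥ R_k^th. Let ζ_c ≥ 0 and ζ_1,…,ζ_K ≥ 0 with ζ_c + Σ_{k=1}^K ζ_k = 1, and define W̄_c = Ŵ_c + ζ_c Ŵ_0, W̄_{p,k}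 = Ŵ_{p,k} + ζ_k Ŵ_0, W̄_0 = 0. Then W̄_c, W̄_0, W̄_{p,1},…,W̄_{p,K} are Hermitian positive semidefinite, satisfy constraints (i), (ii), (iii), and moreover W̄_c + Σ_{k=1}^K W̄_{p,k} + W̄_0 = Ŵ_c + Σ_{k=1}^K Ŵ_{p,k} + Ŵ_0 (so any objective depending only on this sum, such as the sensing SINR, is unchanged). -/

import Mathlib

/-!
Statement 0: Theorem 1 of "STAR-RIS Enabled ISAC Systems: Joint Rate Splitting
and Beamforming Optimization".  Given a feasible set of beamforming covariance
matrices `Ŵ_c, Ŵ_{p,k}, Ŵ_0` (satisfying the power constraint, the common-rate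
constraint and the private-rate constraints), redistributing the dedicated
sensing covariance `Ŵ_0` onto the communication covariances with nonnegative
weights `ζ_c, ζ_k` summing to one yields another feasible set
`W̄_c = Ŵ_c + ζ_c Ŵ_0`, `W̄_{p,k} = Ŵ_{p,k} + ζ_k Ŵ_0`, `W̄_0 = 0`
with the same total transmit covariance `Q`.
-/

open Matrix
open scoped ComplexOrder

private lemma psd_trace_re_nonneg {n : Type*} [Fintype n] [DecidableEq n] {M : Matrix n n ℂ}
    (hM : M.PosSemidef) : 0 ≤ M.trace.re := by
  have h : ∀ i, 0 ≤ (M i i).re := by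
    intro i
    have := hM.re_dotProduct_nonneg (Pi.single i 1)
    simpa [dotProduct, Matrix.mulVec, Pi.single_apply] using this
  have := Finset.sum_nonneg (fun i (_ : i ∈ Finset.univ) => h i)
  simpa [Matrix.trace, Matrix.diag, Complex.re_sum] using this

private lemma trace_mul_re_nonneg {n : Type*} [Fintype n] [DecidableEq n]
    {A B : Matrix n n ℂ} (hA : A.PosSemidef) (hB : B.PosSemidef) :
    0 ≤ (A * B).trace.re := by
  obtain ⟨s, hs, hss⟩ : ∃ s : Matrix n n ℂ, s.IsHermitian ∧ s * s = A :=
    open scoped MatrixOrder in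
    ⟨CFC.sqrt A, (CFC.sqrt_nonneg A).posSemidef.1, CFC.sqrt_mul_sqrt_self A hA.nonneg⟩
  have key : (A * B).trace = (sᴴ * B * s).trace := by
    rw [hs, ← hss, Matrix.mul_assoc, Matrix.trace_mul_comm]
  rw [key]
  exact psd_trace_re_nonneg (hB.conjTranspose_mul_mul_same s)

private lemma psd_smul_real {n : Type*} [Fintype n] {W : Matrix n n ℂ}
    (hW : W.PosSemidef) {ζ : ℝ} (hζ : 0 ≤ ζ) : ((ζ : ℂ) • W).PosSemidef := by
  constructor
  · unfold Matrix.IsHermitian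
    rw [Matrix.conjTranspose_smul, hW.1.eq]
    congr 1
    simp [Complex.conj_ofReal]
  · intro x
    exact (hW.smul (show (0:ℂ) ≤ (ζ:ℂ) by exact_mod_cast hζ)).2 x

private lemma logb_ratio_mono {a a' d d' : ℝ} (ha : 0 ≤ a) (haa : a ≤ a')
    (hd' : 0 < d') (hdd : d' ≤ d) :
    Real.logb 2 (1 + a / d) ≤ Real.logb 2 (1 + a' / d') := by
  have hd : 0 < d := lt_of_lt_of_le hd' hdd
  have h1 : a / d ≤ a' / d' := div_le_div₀ (le_trans ha haa) haa hd' hdd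
  have h0 : (0 : ℝ) < 1 + a / d := by positivity
  exact Real.logb_le_logb_of_le one_lt_two h0 (by linarith)

theorem sensing_waveform_redistribution
    (N K : ℕ) (hN : 0 < N) (hK : 0 < K)
    (Pmax : ℝ) (hP : 0 < Pmax)
    (H : Fin K → Matrix (Fin N) (Fin N) ℂ) (hH : ∀ k, (H k).PosSemidef)
    (σ : Fin K → ℝ) (hσ : ∀ k, 0 < σ k)
    (Rth : Fin K → ℝ)
    (c : Fin K → ℝ) (hc : ∀ k, 0 ≤ c k)
    (Wc W0 : Matrix (Fin N) (Fin N) ℂ)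
    (Wp : Fin K → Matrix (Fin N) (Fin N) ℂ)
    (hWc : Wc.PosSemidef) (hW0 : W0.PosSemidef) (hWp : ∀ k, (Wp k).PosSemidef)
    -- (i) power constraint
    (hpow : Wc.trace.re + ∑ k, (Wp k).trace.re + W0.trace.re ≤ Pmax)
    -- (ii) common-stream rate constraint
    (hcom : ∀ k, ∑ j, c j ≤
      Real.logb 2 (1 + (H k * Wc).trace.re /
        (∑ i, (H k * Wp i).trace.re + (H k * W0).trace.re + σ k ^ 2)))
    -- (iii) private-stream rate constraint
    (hpriv : ∀ k, c k +
      Real.logb 2 (1 + (H k * Wp k).trace.re /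
        (∑ j ∈ Finset.univ.erase k, (H k * Wp j).trace.re +
          (H k * W0).trace.re + σ k ^ 2)) ≥ Rth k)
    (ζc : ℝ) (ζ : Fin K → ℝ)
    (hζc : 0 ≤ ζc) (hζ : ∀ k, 0 ≤ ζ k)
    (hsum : ζc + ∑ k, ζ k = 1) :
    -- the reconstructed matrices are Hermitian positive semidefinite
    (Wc + (ζc : ℂ) • W0).PosSemidef ∧
    (∀ k, (Wp k + (ζ k : ℂ) • W0).PosSemidef) ∧
    (0 : Matrix (Fin N) (Fin N) ℂ).PosSemidef ∧
    -- (i) power constraint still holds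
    (Wc + (ζc : ℂ) • W0).trace.re +
      ∑ k, (Wp k + (ζ k : ℂ) • W0).trace.re +
      (0 : Matrix (Fin N) (Fin N) ℂ).trace.re ≤ Pmax ∧
    -- (ii) common-stream rate constraint still holds
    (∀ k, ∑ j, c j ≤
      Real.logb 2 (1 + (H k * (Wc + (ζc : ℂ) • W0)).trace.re /
        (∑ i, (H k * (Wp i + (ζ i : ℂ) • W0)).trace.re +
          (H k * (0 : Matrix (Fin N) (Fin N) ℂ)).trace.re + σ k ^ 2))) ∧
    -- (iii) private-stream rate constraint still holds
    (∀ k, c k +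
      Real.logb 2 (1 + (H k * (Wp k + (ζ k : ℂ) • W0)).trace.re /
        (∑ j ∈ Finset.univ.erase k,
            (H k * (Wp j + (ζ j : ℂ) • W0)).trace.re +
          (H k * (0 : Matrix (Fin N) (Fin N) ℂ)).trace.re + σ k ^ 2)) ≥
        Rth k) ∧
    -- the total transmit covariance is unchanged
    (Wc + (ζc : ℂ) • W0) + ∑ k, (Wp k + (ζ k : ℂ) • W0) +
        (0 : Matrix (Fin N) (Fin N) ℂ)
      = Wc + ∑ k, Wp k + W0 := by
  -- basic trace facts
  have expand : ∀ (A W : Matrix (Fin N) (Fin N) ℂ) (r : ℝ),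
      (A * (W + (r : ℂ) • W0)).trace.re
        = (A * W).trace.re + r * (A * W0).trace.re := by
    intro A W r
    rw [Matrix.mul_add, Matrix.trace_add, Matrix.mul_smul, Matrix.trace_smul]
    simp [smul_eq_mul, Complex.mul_re]
  have texpand : ∀ (W : Matrix (Fin N) (Fin N) ℂ) (r : ℝ),
      (W + (r : ℂ) • W0).trace.re = W.trace.re + r * W0.trace.re := by
    intro W r
    rw [Matrix.trace_add, Matrix.trace_smul]
    simp [smul_eq_mul, Complex.mul_re]
  have hzero : ∀ k, (H k * (0 : Matrix (Fin N) (Fin N) ℂ)).trace.re = 0 := by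
    intro k; simp
  have hT0 : ∀ k, 0 ≤ (H k * W0).trace.re :=
    fun k => trace_mul_re_nonneg (hH k) hW0
  have hTp : ∀ k j, 0 ≤ (H k * Wp j).trace.re :=
    fun k j => trace_mul_re_nonneg (hH k) (hWp j)
  have hTc : ∀ k, 0 ≤ (H k * Wc).trace.re :=
    fun k => trace_mul_re_nonneg (hH k) hWc
  have hζsum : 0 ≤ ∑ k, ζ k := Finset.sum_nonneg fun k _ => hζ k
  have hζsum1 : ∑ k, ζ k ≤ 1 := by linarith
  refine ⟨hWc.add (psd_smul_real hW0 hζc),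
    fun k => (hWp k).add (psd_smul_real hW0 (hζ k)),
    Matrix.PosSemidef.zero, ?_, ?_, ?_, ?_⟩
  · -- power constraint
    have hexp : ∀ k, (Wp k + (ζ k : ℂ) • W0).trace.re
        = (Wp k).trace.re + ζ k * W0.trace.re := fun k => texpand _ _
    rw [texpand, Finset.sum_congr rfl (fun k _ => hexp k), Finset.sum_add_distrib,
      ← Finset.sum_mul, Matrix.trace_zero]
    have hkey : ζc * W0.trace.re + (∑ i, ζ i) * W0.trace.re = W0.trace.re := by
      rw [← add_mul, hsum, one_mul]
    simp only [Complex.zero_re]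
    linarith [hpow]
  · -- common-stream rate
    intro k
    have hden' : 0 < ∑ i, (H k * Wp i).trace.re
        + (∑ i, ζ i) * (H k * W0).trace.re + σ k ^ 2 := by
      have h1 : 0 ≤ ∑ i, (H k * Wp i).trace.re :=
        Finset.sum_nonneg fun i _ => hTp k i
      have := hσ k
      nlinarith [mul_nonneg hζsum (hT0 k)]
    have key := logb_ratio_mono (a := (H k * Wc).trace.re)
      (a' := (H k * Wc).trace.re + ζc * (H k * W0).trace.re)
      (d := ∑ i, (H k * Wp i).trace.re + (H k * W0).trace.re + σ k ^ 2)
      (d' := ∑ i, (H k * Wp i).trace.re + (∑ i, ζ i) * (H k * W0).trace.re + σ k ^ 2)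
      (hTc k) (by nlinarith [mul_nonneg hζc (hT0 k)]) hden'
      (by nlinarith [hT0 k])
    calc ∑ j, c j ≤ _ := hcom k
      _ ≤ _ := key
      _ = _ := by
        rw [expand, Finset.sum_congr rfl (fun i (_ : i ∈ Finset.univ) => expand (H k) (Wp i) (ζ i)),
          Finset.sum_add_distrib, ← Finset.sum_mul, hzero]
        ring_nf
  · -- private-stream rate
    intro k
    have hζer : ∑ j ∈ Finset.univ.erase k, ζ j ≤ 1 := by
      have h1 : ∑ j ∈ Finset.univ.erase k, ζ j ≤ ∑ j, ζ j :=
        Finset.sum_le_sum_of_subset_of_nonneg (Finset.erase_subset _ _)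
          (fun j _ _ => hζ j)
      linarith
    have hζer0 : 0 ≤ ∑ j ∈ Finset.univ.erase k, ζ j :=
      Finset.sum_nonneg fun j _ => hζ j
    have hsp : 0 ≤ ∑ j ∈ Finset.univ.erase k, (H k * Wp j).trace.re :=
      Finset.sum_nonneg fun j _ => hTp k j
    have hden' : 0 < ∑ j ∈ Finset.univ.erase k, (H k * Wp j).trace.re
        + (∑ j ∈ Finset.univ.erase k, ζ j) * (H k * W0).trace.re + σ k ^ 2 := by
      have := hσ k
      nlinarith [mul_nonneg hζer0 (hT0 k)]
    have key := logb_ratio_mono (a := (H k * Wp k).trace.re)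
      (a' := (H k * Wp k).trace.re + ζ k * (H k * W0).trace.re)
      (d := ∑ j ∈ Finset.univ.erase k, (H k * Wp j).trace.re
        + (H k * W0).trace.re + σ k ^ 2)
      (d' := ∑ j ∈ Finset.univ.erase k, (H k * Wp j).trace.re
        + (∑ j ∈ Finset.univ.erase k, ζ j) * (H k * W0).trace.re + σ k ^ 2)
      (hTp k k) (by nlinarith [mul_nonneg (hζ k) (hT0 k)]) hden'
      (by nlinarith [hT0 k])
    have heq : (H k * (Wp k + (ζ k : ℂ) • W0)).trace.re /
        (∑ j ∈ Finset.univ.erase k, (H k * (Wp j + (ζ j : ℂ) • W0)).trace.re +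
          (H k * (0 : Matrix (Fin N) (Fin N) ℂ)).trace.re + σ k ^ 2)
        = ((H k * Wp k).trace.re + ζ k * (H k * W0).trace.re) /
        (∑ j ∈ Finset.univ.erase k, (H k * Wp j).trace.re
          + (∑ j ∈ Finset.univ.erase k, ζ j) * (H k * W0).trace.re + σ k ^ 2) := by
      rw [expand, Finset.sum_congr rfl (fun j _ => expand (H k) (Wp j) (ζ j)),
        Finset.sum_add_distrib, ← Finset.sum_mul, hzero]
      ring_nf
    rw [ge_iff_le, heq]
    calc Rth k ≤ _ := hpriv k
      _ ≤ _ := by exact add_le_add_right key (c k)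
  · -- total covariance unchanged
    have hζ1 : (ζc : ℂ) + ∑ k, ((ζ k : ℝ) : ℂ) = 1 := by
      rw [← Complex.ofReal_sum, ← Complex.ofReal_add, hsum, Complex.ofReal_one]
    calc (Wc + (ζc : ℂ) • W0) + ∑ k, (Wp k + (ζ k : ℂ) • W0)
          + (0 : Matrix (Fin N) (Fin N) ℂ)
        = Wc + ∑ k, Wp k + ((ζc : ℂ) + ∑ k, ((ζ k : ℝ) : ℂ)) • W0 := by
          rw [Finset.sum_add_distrib, add_smul, Finset.sum_smul]
          abel
      _ = Wc + ∑ k, Wp k + W0 := by rw [hζ1, one_smul]
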